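/- There is an absolute constant c > 0 such that for every prime power q and every integer m ≥ 1, the number of α ∈ F_{q^m}^× that are not SU-regular is at most c·m²·q^{1 + m/2}. -/

import Mathlib

open Matrix CategoryTheory

noncomputable section

set_option maxHeartbeats 1600000

/-- The orbit of a nonzero element `α` of the algebraic closure under
`α ↦ ω·α^{±q^i}` with `ω^{q+1} = 1`. -/
def suOrbit (q : ℕ) {K : Type} [Field K] (α : AlgebraicClosure K) :
    Set (AlgebraicClosure K) :=
  {x | ∃ ω : AlgebraicClosure K, ω ^ (q + 1) = 1 ∧
    ∃ i : ℕ, x = ω * α ^ q ^ i ∨ x = ω * α⁻¹ ^ q ^ i}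

/-- `α ∈ F_{q^m}^×` is `SU`-regular if its orbit has exactly `2m(q+1)` elements. -/
def IsSURegular (q m : ℕ) {K : Type} [Field K] (α : AlgebraicClosure K) : Prop :=
  (suOrbit q α).ncard = 2 * m * (q + 1)

section AuxLemmas

open Polynomial Finset

variable {A : Type} [Field A]

lemma aux_pow_qpow_mul {β : A} {q m : ℕ} (h : β ^ q ^ m = β) (t : ℕ) :
    β ^ q ^ (m * t) = β := by
  induction t with
  | zero => simp
  | succ t ih => rw [Nat.mul_succ, pow_add, pow_mul, ih, h]

lemma aux_pow_qpow_mod {β : A} {q m : ℕ} (h : β ^ q ^ m = β) (i : ℕ) :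
    β ^ q ^ i = β ^ q ^ (i % m) := by
  conv_lhs => rw [← Nat.div_add_mod i m]
  rw [pow_add, pow_mul, aux_pow_qpow_mul h]

lemma aux_pow_sub_eq_one {α : A} (hα : α ≠ 0) {a b : ℕ} (hle : b ≤ a)
    (h : α ^ a = α ^ b) : α ^ (a - b) = 1 := by
  have hb : α ^ b ≠ 0 := pow_ne_zero _ hα
  apply mul_left_cancel₀ hb
  rw [mul_one, ← pow_add, Nat.add_sub_cancel' hle, h]

lemma aux_gcd_pow_sub_one (q : ℕ) (hq : 1 ≤ q) (k m : ℕ) :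
    Nat.gcd (q ^ k - 1) (q ^ m - 1) ∣ q ^ Nat.gcd k m - 1 := by
  set d := Nat.gcd (q ^ k - 1) (q ^ m - 1) with hd
  have key : ∀ n : ℕ, d ∣ q ^ n - 1 ↔ (q : ZMod d) ^ n = 1 := by
    intro n
    rw [← Nat.modEq_iff_dvd' (Nat.one_le_pow n q hq)]
    constructor
    · intro h
      have := (ZMod.natCast_eq_natCast_iff _ _ _).2 h.symm
      push_cast at this
      simpa using this
    · intro h
      have : ((q ^ n : ℕ) : ZMod d) = ((1 : ℕ) : ZMod d) := by push_cast; simpa using h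
      exact ((ZMod.natCast_eq_natCast_iff _ _ _).1 this).symm
  have h1 : (q : ZMod d) ^ k = 1 := (key k).1 (Nat.gcd_dvd_left _ _)
  have h2 : (q : ZMod d) ^ m = 1 := (key m).1 (Nat.gcd_dvd_right _ _)
  exact (key _).2 (orderOf_dvd_iff_pow_eq_one.1
    (Nat.dvd_gcd (orderOf_dvd_of_pow_eq_one h1) (orderOf_dvd_of_pow_eq_one h2)))

lemma aux_two_mul_le_of_proper_dvd {d m : ℕ} (hdvd : d ∣ m) (hne : d ≠ m) (hm : 1 ≤ m) :
    2 * d ≤ m := by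
  obtain ⟨t, rfl⟩ := hdvd
  rcases t with _ | _ | t
  · omega
  · omega
  · calc 2 * d = d * 2 := by ring
      _ ≤ d * (t + 1 + 1) := Nat.mul_le_mul_left d (by omega)

/-- The key structural lemma: if `α` satisfies no multiplicative "collision"
relations, then it is `SU`-regular. -/
lemma aux_regular_of_no_collision {K : Type} [Field K] (q m : ℕ)
    (hq1 : 1 ≤ q) (hm : 1 ≤ m)
    (hchar : ((q : ℕ) : AlgebraicClosure K) = 0)
    (α : AlgebraicClosure K) (hα : α ≠ 0) (hfix : α ^ q ^ m = α)
    (Hminus : ∀ i j : ℕ, j < i → i < m → α ^ ((q + 1) * (q ^ i - q ^ j)) ≠ 1)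
    (Hplus : ∀ i j : ℕ, i < m → j < m → α ^ ((q + 1) * (q ^ i + q ^ j)) ≠ 1) :
    IsSURegular q m α := by
  classical
  have hpos : 0 < q + 1 := Nat.succ_pos q
  have hq1A : ((q + 1 : ℕ) : (AlgebraicClosure K)) ≠ 0 := by
    push_cast
    rw [hchar]
    simp
  have hcyc : IsCyclotomicExtension ({q + 1} : Set ℕ) (AlgebraicClosure K) (AlgebraicClosure K) :=
    IsSepClosed.isCyclotomicExtension _ _ (fun a ha _ => by
      rw [Set.mem_singleton_iff] at ha
      subst ha
      exact ⟨hq1A⟩)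
  obtain ⟨ζ, hζ⟩ := hcyc.exists_isPrimitiveRoot (Set.mem_singleton _) (by omega)
  have hζ' : IsPrimitiveRoot ζ (q + 1) := hζ
  set μF : Finset (AlgebraicClosure K) := nthRootsFinset (q + 1) (1 : AlgebraicClosure K) with hμF
  have hμcard : μF.card = q + 1 := hζ'.card_nthRootsFinset
  have hmemμ : ∀ x : (AlgebraicClosure K), x ∈ μF ↔ x ^ (q + 1) = 1 := fun x => mem_nthRootsFinset hpos 1
  set P : ℕ → Finset (AlgebraicClosure K) := fun i => μF.image (· * α ^ q ^ i) with hP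
  set N : ℕ → Finset (AlgebraicClosure K) := fun i => μF.image (· * α⁻¹ ^ q ^ i) with hN
  set orbF : Finset (AlgebraicClosure K) := (range m).biUnion P ∪ (range m).biUnion N with horb
  have hinvfix : α⁻¹ ^ q ^ m = α⁻¹ := by rw [inv_pow, hfix]
  -- Step (AlgebraicClosure K) : the orbit is the coercion of `orbF`.
  have hsub : suOrbit q α = ↑orbF := by
    ext x
    constructor
    · rintro ⟨ω, hω, i, rfl | rfl⟩
      · refine Finset.mem_coe.2 (Finset.mem_union_left _ (Finset.mem_biUnion.2
          ⟨i % m, Finset.mem_range.2 (Nat.mod_lt _ (by omega)),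
            Finset.mem_image.2 ⟨ω, (hmemμ ω).2 hω, ?_⟩⟩))
        rw [aux_pow_qpow_mod hfix i]
      · refine Finset.mem_coe.2 (Finset.mem_union_right _ (Finset.mem_biUnion.2
          ⟨i % m, Finset.mem_range.2 (Nat.mod_lt _ (by omega)),
            Finset.mem_image.2 ⟨ω, (hmemμ ω).2 hω, ?_⟩⟩))
        rw [aux_pow_qpow_mod hinvfix i]
    · intro hx
      rcases Finset.mem_union.1 (Finset.mem_coe.1 hx) with h | h
      · obtain ⟨i, _, himg⟩ := Finset.mem_biUnion.1 h
        obtain ⟨ω, hω, hximg⟩ := Finset.mem_image.1 himg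
        exact ⟨ω, (hmemμ ω).1 hω, i, Or.inl hximg.symm⟩
      · obtain ⟨i, _, himg⟩ := Finset.mem_biUnion.1 h
        obtain ⟨ω, hω, hximg⟩ := Finset.mem_image.1 himg
        exact ⟨ω, (hmemμ ω).1 hω, i, Or.inr hximg.symm⟩
  -- Disjointness criterion
  have L : ∀ β γ : (AlgebraicClosure K), β ^ (q + 1) ≠ γ ^ (q + 1) →
      Disjoint (μF.image (· * β)) (μF.image (· * γ)) := by
    intro β γ hne
    rw [Finset.disjoint_left]
    rintro x hx hx'
    obtain ⟨ω, hω, rfl⟩ := Finset.mem_image.1 hx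
    obtain ⟨ω', hω', heq⟩ := Finset.mem_image.1 hx'
    apply hne
    calc β ^ (q + 1) = (ω * β) ^ (q + 1) := by
          rw [mul_pow, (hmemμ ω).1 hω, one_mul]
      _ = (ω' * γ) ^ (q + 1) := by rw [heq]
      _ = γ ^ (q + 1) := by rw [mul_pow, (hmemμ ω').1 hω', one_mul]
  -- the collision inequalities
  have hE : ∀ a b : ℕ, b < a → a < m →
      (α ^ q ^ a) ^ (q + 1) ≠ (α ^ q ^ b) ^ (q + 1) := by
    intro a b hba ham h
    rw [← pow_mul, ← pow_mul] at h
    have h1 : α ^ (q ^ a * (q + 1) - q ^ b * (q + 1)) = 1 :=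
      aux_pow_sub_eq_one hα
        (Nat.mul_le_mul_right _ (Nat.pow_le_pow_right hq1 hba.le)) h
    apply Hminus a b hba ham
    have e : (q + 1) * (q ^ a - q ^ b) = q ^ a * (q + 1) - q ^ b * (q + 1) := by
      rw [Nat.mul_comm, Nat.sub_mul]
    rw [e]
    exact h1
  have hE2 : ∀ a b : ℕ, a < m → b < m →
      (α ^ q ^ a) ^ (q + 1) * (α ^ q ^ b) ^ (q + 1) ≠ 1 := by
    intro a b ha hb h
    apply Hplus a b ha hb
    rw [← pow_mul, ← pow_mul, ← pow_add] at h
    have e : (q + 1) * (q ^ a + q ^ b) = q ^ a * (q + 1) + q ^ b * (q + 1) := by ring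
    rw [e]
    exact h
  have hinvpow : ∀ i : ℕ, (α⁻¹ ^ q ^ i) ^ (q + 1) = ((α ^ q ^ i) ^ (q + 1))⁻¹ := by
    intro i
    rw [inv_pow, inv_pow]
  -- pairwise disjointness
  have hPdis : ∀ a ∈ range m, ∀ b ∈ range m, a ≠ b → Disjoint (P a) (P b) := by
    intro a ha b hb hne
    rcases hne.lt_or_gt with h | h
    · exact L _ _ (fun he => hE b a h (Finset.mem_range.1 hb) he.symm)
    · exact L _ _ (hE a b h (Finset.mem_range.1 ha))
  have hNdis : ∀ a ∈ range m, ∀ b ∈ range m, a ≠ b → Disjoint (N a) (N b) := by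
    intro a ha b hb hne
    apply L
    rw [hinvpow, hinvpow]
    intro h
    have h' := inv_injective h
    rcases hne.lt_or_gt with hlt | hlt
    · exact hE b a hlt (Finset.mem_range.1 hb) h'.symm
    · exact hE a b hlt (Finset.mem_range.1 ha) h'
  have hPN : ∀ a ∈ range m, ∀ b ∈ range m, Disjoint (P a) (N b) := by
    intro a ha b hb
    apply L
    rw [hinvpow]
    intro h
    exact hE2 a b (Finset.mem_range.1 ha) (Finset.mem_range.1 hb)
      (by rw [h, inv_mul_cancel₀ (pow_ne_zero _ (pow_ne_zero _ hα))])
  -- cardinalities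
  have hcardP : ∀ i : ℕ, (P i).card = q + 1 := by
    intro i
    rw [hP]
    rw [Finset.card_image_of_injective _ (mul_left_injective₀ (pow_ne_zero _ hα))]
    exact hμcard
  have hcardN : ∀ i : ℕ, (N i).card = q + 1 := by
    intro i
    rw [hN]
    rw [Finset.card_image_of_injective _
      (mul_left_injective₀ (pow_ne_zero _ (inv_ne_zero hα)))]
    exact hμcard
  have hc1 : ((range m).biUnion P).card = m * (q + 1) := by
    rw [Finset.card_biUnion hPdis]
    rw [Finset.sum_congr rfl (fun i _ => hcardP i), Finset.sum_const, card_range,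
      smul_eq_mul]
  have hc2 : ((range m).biUnion N).card = m * (q + 1) := by
    rw [Finset.card_biUnion hNdis]
    rw [Finset.sum_congr rfl (fun i _ => hcardN i), Finset.sum_const, card_range,
      smul_eq_mul]
  have hdisPN : Disjoint ((range m).biUnion P) ((range m).biUnion N) := by
    rw [Finset.disjoint_biUnion_left]
    intro a ha
    rw [Finset.disjoint_biUnion_right]
    intro b hb
    exact hPN a ha b hb
  have hcard : orbF.card = 2 * m * (q + 1) := by
    rw [horb, Finset.card_union_of_disjoint hdisPN, hc1, hc2]
    ring
  unfold IsSURegular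
  rw [hsub, Set.ncard_coe_finset, hcard]

end AuxLemmas

/-- There is an absolute constant `c > 0` such that for every prime power `q` and every
`m ≥ 1`, the number of elements of `F_{q^m}^×` that are not `SU`-regular is at most
`c · m² · q^{1 + m/2}`. -/
theorem count_non_SU_regular :
    ∃ c : ℝ, 0 < c ∧ ∀ q : ℕ, IsPrimePow q →
    ∀ (K : Type) [Field K] [Fintype K], Fintype.card K = q →
    ∀ m : ℕ, 1 ≤ m →
      (({α : AlgebraicClosure K | α ≠ 0 ∧ α ^ q ^ m = α ∧
          ¬ IsSURegular q m α}.ncard : ℝ)) ≤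
        c * (m : ℝ) ^ 2 * (q : ℝ) ^ (1 + (m : ℝ) / 2) := by
  classical
  refine ⟨8, by norm_num, ?_⟩
  intro q hq K _ _ hK m hm
  set A := AlgebraicClosure K with hA
  have hq2 : 2 ≤ q := hq.two_le
  have hcharK : ((q : ℕ) : K) = 0 := by
    rw [← hK]
    exact FiniteField.cast_card_eq_zero K
  have hchar : ((q : ℕ) : A) = 0 := by
    have : ((q : ℕ) : A) = algebraMap K A ((q : ℕ) : K) := by
      rw [map_natCast]
    rw [this, hcharK, map_zero]
  have hqm1 : 1 ≤ q ^ m := Nat.one_le_pow _ _ (by omega)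
  have hqm2 : 2 ≤ q ^ m := le_trans hq2 (Nat.le_self_pow (by omega) q)
  have hqm1pos : 0 < q ^ m - 1 := by omega
  set D1 : ℕ → ℕ := fun k => Nat.gcd ((q + 1) * (q ^ k - 1)) (q ^ m - 1) with hD1
  set D2 : ℕ → ℕ := fun k => Nat.gcd ((q + 1) * (q ^ k + 1)) (q ^ m - 1) with hD2
  set d1 : ℕ → ℕ := fun k => if k = 0 then 1 else D1 k with hd1
  have hD1pos : ∀ k, 0 < D1 k := fun k => Nat.gcd_pos_of_pos_right _ hqm1pos
  have hD2pos : ∀ k, 0 < D2 k := fun k => Nat.gcd_pos_of_pos_right _ hqm1pos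
  have hd1pos : ∀ k, 0 < d1 k := by
    intro k
    rw [hd1]
    dsimp only
    split
    · norm_num
    · exact hD1pos k
  set F : Finset A := (Finset.range m).biUnion
    (fun k => (Polynomial.nthRoots (d1 k) (1 : A)).toFinset ∪
      (Polynomial.nthRoots (D2 k) (1 : A)).toFinset) with hF
  -- Step 1: the bad set is contained in F
  have hsubset : {α : A | α ≠ 0 ∧ α ^ q ^ m = α ∧ ¬ IsSURegular q m α} ⊆ ↑F := by
    rintro α ⟨hα, hfix, hnreg⟩
    have hord : orderOf α ∣ q ^ m - 1 :=
      orderOf_dvd_of_pow_eq_one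
        (aux_pow_sub_eq_one hα hqm1 (by rw [pow_one]; exact hfix))
    have hcop : Nat.Coprime (q ^ m - 1) q := by
      have h1 : Nat.gcd (q ^ m - 1) q ∣ q ^ m :=
        (Nat.gcd_dvd_right _ _).trans (dvd_pow_self q (by omega))
      have h2 : Nat.gcd (q ^ m - 1) q ∣ q ^ m - 1 := Nat.gcd_dvd_left _ _
      have h3 : Nat.gcd (q ^ m - 1) q ∣ 1 := by
        have := Nat.dvd_sub h1 h2
        rwa [Nat.sub_sub_self (by omega)] at this
      exact Nat.dvd_one.1 h3
    have hcopj : ∀ j : ℕ, Nat.Coprime (orderOf α) (q ^ j) := fun j =>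
      Nat.Coprime.coprime_dvd_left hord (hcop.pow_right j)
    -- handle the "plus" collision
    have plus_case : ∀ i j : ℕ, j ≤ i → i < m →
        α ^ ((q + 1) * (q ^ i + q ^ j)) = 1 → α ∈ (F : Set A) := by
      intro i j hji him hcol
      set k := i - j with hk
      have hfac : (q + 1) * (q ^ i + q ^ j) = ((q + 1) * (q ^ k + 1)) * q ^ j := by
        have hi : q ^ i = q ^ k * q ^ j := by
          rw [← pow_add]
          congr 1
          omega
        rw [hi]
        ring
      have hdvd : orderOf α ∣ ((q + 1) * (q ^ k + 1)) * q ^ j := by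
        rw [← hfac]
        exact orderOf_dvd_of_pow_eq_one hcol
      have hdvd2 : orderOf α ∣ (q + 1) * (q ^ k + 1) :=
        (hcopj j).dvd_of_dvd_mul_right hdvd
      have hroot : α ^ D2 k = 1 :=
        orderOf_dvd_iff_pow_eq_one.1 (Nat.dvd_gcd hdvd2 hord)
      refine Finset.mem_coe.2 (Finset.mem_biUnion.2
        ⟨k, Finset.mem_range.2 (by omega), Finset.mem_union_right _ ?_⟩)
      exact Multiset.mem_toFinset.2 ((Polynomial.mem_nthRoots (hD2pos k)).2 hroot)
    by_cases Hm : ∀ i j : ℕ, j < i → i < m → α ^ ((q + 1) * (q ^ i - q ^ j)) ≠ 1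
    · by_cases Hp : ∀ i j : ℕ, i < m → j < m → α ^ ((q + 1) * (q ^ i + q ^ j)) ≠ 1
      · exact absurd (aux_regular_of_no_collision q m (by omega) hm hchar α hα hfix Hm Hp) hnreg
      · push_neg at Hp
        obtain ⟨i, j, him, hjm, hcol⟩ := Hp
        rcases le_total j i with hle | hle
        · exact plus_case i j hle him hcol
        · refine plus_case j i hle hjm ?_
          rwa [Nat.add_comm (q ^ j)]
    · push_neg at Hm
      obtain ⟨i, j, hji, him, hcol⟩ := Hm
      set k := i - j with hk
      have hk0 : k ≠ 0 := by omega
      have hfac : (q + 1) * (q ^ i - q ^ j) = ((q + 1) * (q ^ k - 1)) * q ^ j := by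
        have h2 : (q ^ k - 1) * q ^ j = q ^ i - q ^ j := by
          rw [Nat.sub_mul, one_mul, ← pow_add]
          congr 2
          omega
        rw [← h2]
        exact (mul_assoc _ _ _).symm
      have hdvd : orderOf α ∣ ((q + 1) * (q ^ k - 1)) * q ^ j := by
        rw [← hfac]
        exact orderOf_dvd_of_pow_eq_one hcol
      have hdvd2 : orderOf α ∣ (q + 1) * (q ^ k - 1) :=
        (hcopj j).dvd_of_dvd_mul_right hdvd
      have hroot : α ^ D1 k = 1 :=
        orderOf_dvd_iff_pow_eq_one.1 (Nat.dvd_gcd hdvd2 hord)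
      refine Finset.mem_coe.2 (Finset.mem_biUnion.2
        ⟨k, Finset.mem_range.2 (by omega), Finset.mem_union_left _ ?_⟩)
      refine Multiset.mem_toFinset.2 ((Polynomial.mem_nthRoots (hd1pos k)).2 ?_)
      have : d1 k = D1 k := by rw [hd1]; simp [hk0]
      rw [this]
      exact hroot
  -- Step 2: the cardinality estimates
  have hcount : ({α : A | α ≠ 0 ∧ α ^ q ^ m = α ∧ ¬ IsSURegular q m α}.ncard : ℝ)
      ≤ (F.card : ℝ) := by
    have h1 := Set.ncard_le_ncard hsubset F.finite_toSet
    rw [Set.ncard_coe_finset] at h1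
    exact_mod_cast h1
  have hcardF : F.card ≤ ∑ k ∈ Finset.range m, (d1 k + D2 k) := by
    refine le_trans (Finset.card_biUnion_le) (Finset.sum_le_sum ?_)
    intro k _
    refine le_trans (Finset.card_union_le _ _) ?_
    gcongr
    · exact le_trans (Multiset.toFinset_card_le _) (Polynomial.card_nthRoots _ _)
    · exact le_trans (Multiset.toFinset_card_le _) (Polynomial.card_nthRoots _ _)
  -- real bounds
  have hq1R : (1 : ℝ) ≤ (q : ℝ) := by exact_mod_cast (by omega : 1 ≤ q)
  have hq0R : (0 : ℝ) < (q : ℝ) := by positivity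
  set Q : ℝ := (q : ℝ) ^ ((m : ℝ) / 2) with hQ
  have hQ1 : (1 : ℝ) ≤ Q := by
    rw [hQ]
    calc (1 : ℝ) = (q : ℝ) ^ (0 : ℝ) := (Real.rpow_zero _).symm
      _ ≤ (q : ℝ) ^ ((m : ℝ) / 2) :=
          Real.rpow_le_rpow_of_exponent_le hq1R (by positivity)
  have hpow_le : ∀ n : ℕ, 2 * n ≤ m → ((q : ℝ) ^ n : ℝ) ≤ Q := by
    intro n hn
    rw [hQ, ← Real.rpow_natCast (q : ℝ) n]
    apply Real.rpow_le_rpow_of_exponent_le hq1R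
    have : (n : ℝ) ≤ (m : ℝ) / 2 := by
      rw [le_div_iff₀ (by norm_num : (0:ℝ) < 2)]
      exact_mod_cast by omega
    exact this
  -- bound on d1
  have hb1 : ∀ k, k < m → ((d1 k : ℕ) : ℝ) ≤ 2 * (q : ℝ) * Q := by
    intro k hkm
    rcases Nat.eq_zero_or_pos k with rfl | hk0
    · have : d1 0 = 1 := by rw [hd1]; simp
      rw [this]
      push_cast
      nlinarith
    · have hne : d1 k = D1 k := by rw [hd1]; simp [Nat.pos_iff_ne_zero.1 hk0]
      rw [hne]
      set g := Nat.gcd k m with hg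
      have hgm : g ∣ m := Nat.gcd_dvd_right _ _
      have hgne : g ≠ m := by
        have hgk : g ≤ k := Nat.le_of_dvd hk0 (hg ▸ Nat.gcd_dvd_left k m)
        omega
      have h2g : 2 * g ≤ m := aux_two_mul_le_of_proper_dvd hgm hgne hm
      have hdvd : D1 k ∣ (q + 1) * (q ^ g - 1) := by
        have h1 : D1 k ∣ Nat.gcd (q + 1) (q ^ m - 1) * Nat.gcd (q ^ k - 1) (q ^ m - 1) := by
          rw [hD1]
          dsimp only
          rw [Nat.gcd_comm]
          have := gcd_mul_dvd_mul_gcd (q ^ m - 1) (q + 1) (q ^ k - 1)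
          rw [gcd_eq_nat_gcd, gcd_eq_nat_gcd, gcd_eq_nat_gcd] at this
          rw [Nat.gcd_comm (q + 1) (q ^ m - 1), Nat.gcd_comm (q ^ k - 1) (q ^ m - 1)]
          exact this
        refine h1.trans (Nat.mul_dvd_mul ?_ ?_)
        · exact Nat.gcd_dvd_left _ _
        · exact aux_gcd_pow_sub_one q (by omega) k m
      have hgpos : 0 < g := by
        rw [hg]
        exact Nat.gcd_pos_of_pos_left m hk0
      have hle : D1 k ≤ (q + 1) * (q ^ g - 1) := by
        apply Nat.le_of_dvd _ hdvd
        have h2q : 2 ≤ q ^ g := le_trans hq2 (Nat.le_self_pow hgpos.ne' q)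
        have : 0 < q ^ g - 1 := by omega
        positivity
      calc ((D1 k : ℕ) : ℝ) ≤ ((q + 1) * (q ^ g - 1) : ℕ) := by exact_mod_cast hle
        _ ≤ ((q + 1 : ℕ) : ℝ) * ((q ^ g : ℕ) : ℝ) := by
            push_cast
            have : ((q ^ g - 1 : ℕ) : ℝ) ≤ ((q ^ g : ℕ) : ℝ) := by
              exact_mod_cast Nat.sub_le _ _
            push_cast at this
            nlinarith [this, hq1R]
        _ ≤ 2 * (q : ℝ) * Q := by
            push_cast
            have h1 : ((q : ℝ) + 1) ≤ 2 * (q : ℝ) := by linarith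
            have h2 : ((q : ℝ)) ^ g ≤ Q := hpow_le g h2g
            have h3 : (0:ℝ) ≤ (q:ℝ) ^ g := by positivity
            nlinarith
  -- bound on D2
  have hb2 : ∀ k, k < m → ((D2 k : ℕ) : ℝ) ≤ 2 * (q : ℝ) * (Q + 1) := by
    intro k hkm
    set G := Nat.gcd (q ^ k + 1) (q ^ m - 1) with hG
    have hdvd : D2 k ∣ (q + 1) * G := by
      have h1 : D2 k ∣ Nat.gcd (q + 1) (q ^ m - 1) * G := by
        rw [hD2, hG]
        dsimp only
        rw [Nat.gcd_comm]
        have := gcd_mul_dvd_mul_gcd (q ^ m - 1) (q + 1) (q ^ k + 1)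
        rw [gcd_eq_nat_gcd, gcd_eq_nat_gcd, gcd_eq_nat_gcd] at this
        rw [Nat.gcd_comm (q + 1) (q ^ m - 1), Nat.gcd_comm (q ^ k + 1) (q ^ m - 1)]
        exact this
      exact h1.trans (Nat.mul_dvd_mul (Nat.gcd_dvd_left _ _) dvd_rfl)
    have hGpos : 0 < G := Nat.gcd_pos_of_pos_right _ hqm1pos
    have hle : D2 k ≤ (q + 1) * G := Nat.le_of_dvd (Nat.mul_pos (by omega) hGpos) hdvd
    have hGR : ((G : ℕ) : ℝ) ≤ Q + 1 := by
      rcases Nat.eq_zero_or_pos k with rfl | hk0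
      · -- G = gcd 2 (q^m-1) ≤ 2
        have : G ≤ 2 := by
          have : G ∣ 2 := by
            rw [hG, pow_zero]
            exact Nat.gcd_dvd_left _ _
          exact Nat.le_of_dvd (by norm_num) this
        calc ((G : ℕ) : ℝ) ≤ 2 := by exact_mod_cast this
          _ ≤ Q + 1 := by linarith
      · by_cases h2k : 2 * k = m
        · have hle2 : G ≤ q ^ k + 1 := Nat.le_of_dvd (by positivity)
            (Nat.gcd_dvd_left _ _)
          have hQeq : ((q : ℝ)) ^ k = Q := by
            rw [hQ, ← Real.rpow_natCast (q : ℝ) k]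
            congr 1
            have : (m : ℝ) = 2 * (k : ℝ) := by exact_mod_cast h2k.symm
            rw [this]
            ring
          calc ((G : ℕ) : ℝ) ≤ ((q ^ k + 1 : ℕ) : ℝ) := by exact_mod_cast hle2
            _ = (q : ℝ) ^ k + 1 := by push_cast; ring
            _ = Q + 1 := by rw [hQeq]
        · set g2 := Nat.gcd (2 * k) m with hg2
          have hg2m : g2 ∣ m := Nat.gcd_dvd_right _ _
          have hg2ne : g2 ≠ m := by
            have hdv : g2 ∣ 2 * k := hg2 ▸ Nat.gcd_dvd_left (2 * k) m
            intro h
            rw [h] at hdv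
            rcases hdv with ⟨t, ht⟩
            rcases t with _ | _ | t
            · omega
            · omega
            · have : m * 2 ≤ m * (t + 1 + 1) := Nat.mul_le_mul_left m (by omega)
              omega
          have h2g2 : 2 * g2 ≤ m := aux_two_mul_le_of_proper_dvd hg2m hg2ne hm
          have hGdvd : G ∣ q ^ g2 - 1 := by
            have h1 : G ∣ Nat.gcd (q ^ (2 * k) - 1) (q ^ m - 1) := by
              refine Nat.dvd_gcd ?_ (Nat.gcd_dvd_right _ _)
              refine (Nat.gcd_dvd_left (q ^ k + 1) (q ^ m - 1)).trans ?_
              have : q ^ (2 * k) - 1 = (q ^ k + 1) * (q ^ k - 1) := by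
                have hqk : 1 ≤ q ^ k := Nat.one_le_pow _ _ (by omega)
                have : q ^ (2 * k) = q ^ k * q ^ k := by
                  rw [two_mul, pow_add]
                rw [this]
                cases' Nat.exists_eq_add_of_le hqk with c hc
                rw [hc]
                have e1 : 1 + c - 1 = c := by omega
                rw [e1]
                have e2 : (1 + c) * (1 + c) = (1 + c + 1) * c + 1 := by ring
                omega
              rw [this]
              exact Dvd.intro _ rfl
            exact h1.trans (aux_gcd_pow_sub_one q (by omega) (2 * k) m)
          have hg2pos : 0 < g2 := by
            rw [hg2]
            exact Nat.gcd_pos_of_pos_left m (by omega)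
          have hle3 : G ≤ q ^ g2 - 1 := Nat.le_of_dvd (by
            have : 2 ≤ q ^ g2 := le_trans hq2 (Nat.le_self_pow hg2pos.ne' q)
            omega) hGdvd
          calc ((G : ℕ) : ℝ) ≤ ((q ^ g2 : ℕ) : ℝ) := by
                exact_mod_cast le_trans hle3 (Nat.sub_le _ _)
            _ = (q : ℝ) ^ g2 := by push_cast; ring
            _ ≤ Q := hpow_le g2 h2g2
            _ ≤ Q + 1 := by linarith
    calc ((D2 k : ℕ) : ℝ) ≤ ((q + 1 : ℕ) : ℝ) * ((G : ℕ) : ℝ) := by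
          exact_mod_cast hle
      _ ≤ 2 * (q : ℝ) * (Q + 1) := by
          push_cast
          have h1 : ((q : ℝ) + 1) ≤ 2 * (q : ℝ) := by linarith
          have h2 : (0:ℝ) ≤ ((G : ℕ) : ℝ) := by positivity
          have h3 : (0:ℝ) < Q + 1 := by linarith
          nlinarith [hGR]
  -- assemble
  have hsum : ((F.card : ℕ) : ℝ) ≤ (m : ℝ) * (6 * (q : ℝ) * Q) := by
    calc ((F.card : ℕ) : ℝ) ≤ ((∑ k ∈ Finset.range m, (d1 k + D2 k) : ℕ) : ℝ) := by
          exact_mod_cast hcardF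
      _ = ∑ k ∈ Finset.range m, (((d1 k : ℕ) : ℝ) + ((D2 k : ℕ) : ℝ)) := by
          push_cast
          ring
      _ ≤ ∑ _k ∈ Finset.range m, (6 * (q : ℝ) * Q) := by
          apply Finset.sum_le_sum
          intro k hk
          have hk' := Finset.mem_range.1 hk
          have h1 := hb1 k hk'
          have h2 := hb2 k hk'
          nlinarith [hq1R, hQ1]
      _ = (m : ℝ) * (6 * (q : ℝ) * Q) := by
          rw [Finset.sum_const, Finset.card_range]
          simp
  have hrpow : (q : ℝ) ^ (1 + (m : ℝ) / 2) = (q : ℝ) * Q := by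
    rw [Real.rpow_add hq0R, Real.rpow_one, hQ]
  have hmR : (1 : ℝ) ≤ (m : ℝ) := by exact_mod_cast hm
  calc ({α : A | α ≠ 0 ∧ α ^ q ^ m = α ∧ ¬ IsSURegular q m α}.ncard : ℝ)
      ≤ (F.card : ℝ) := hcount
    _ ≤ (m : ℝ) * (6 * (q : ℝ) * Q) := hsum
    _ ≤ 8 * (m : ℝ) ^ 2 * ((q : ℝ) * Q) := by nlinarith [hq1R, hQ1, hmR]
    _ = 8 * (m : ℝ) ^ 2 * (q : ℝ) ^ (1 + (m : ℝ) / 2) := by rw [hrpow]
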